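/- Let F(f) = c₀·f^n + c₁·f^{n-1} + ... + c_k·f^{n-k} + c_{k+1} be a polynomial with n > 1, 0 ≤ n-k ≤ 1, and c₀ > c_{k+1}. If f : ℝ → ℝ is a C² nonnegative bounded function with bounded second derivative satisfying f''(x) ≥ F(f(x)) for all x ∈ ℝ, then F(sup f) ≤ 0. -/

import Mathlib

open Set Filter

private lemma mono_of_hasDerivAt {φ φ' : ℝ → ℝ} (h : ∀ t, HasDerivAt φ (φ' t) t) {a b : ℝ}
    (h' : ∀ s ∈ Set.Icc a b, 0 ≤ φ' s) : MonotoneOn φ (Set.Icc a b) := by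
  apply monotoneOn_of_deriv_nonneg (convex_Icc a b)
  · exact fun s _ => (h s).continuousAt.continuousWithinAt
  · exact fun s _ => ((h s).differentiableAt).differentiableWithinAt
  · intro s hs
    rw [interior_Icc] at hs
    rw [(h s).deriv]
    exact h' s (Ioo_subset_Icc_self hs)

/-- If `g''` is at least `δ` on `[a,b]`, then `g' s ≥ g' a + δ (s - a)` on `[a,b]`. -/
private lemma deriv_lower {g' g'' : ℝ → ℝ} (h : ∀ t, HasDerivAt g' (g'' t) t) {a b δ : ℝ}
    (h' : ∀ s ∈ Set.Icc a b, δ ≤ g'' s) :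
    ∀ s ∈ Set.Icc a b, g' a + δ * (s - a) ≤ g' s := by
  intro s hs
  have hm : MonotoneOn (fun t => g' t - δ * t) (Set.Icc a b) := by
    apply mono_of_hasDerivAt (φ' := fun t => g'' t - δ)
    · intro t
      simpa using (h t).fun_sub ((hasDerivAt_id t).const_mul δ)
    · intro t ht; linarith [h' t ht]
  have ha : a ∈ Set.Icc a b := ⟨le_refl a, hs.1.trans hs.2⟩
  have := hm ha hs hs.1
  simp only at this
  linarith

/-- Key analytic lemma: a bounded `C²`-style function on ℝ that is close to its bound at 0,
with nonnegative derivative at 0, and whose second derivative is ≥ δ > 0 wherever the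
function exceeds `M - η`, gives a contradiction. -/
private lemma aux_blowup (M η δ : ℝ) (hδ : 0 < δ) (g g' g'' : ℝ → ℝ)
    (hg1 : ∀ t, HasDerivAt g (g' t) t) (hg2 : ∀ t, HasDerivAt g' (g'' t) t)
    (hM : ∀ t, g t ≤ M) (h0 : M - η < g 0) (h0' : 0 ≤ g' 0)
    (hdd : ∀ t, M - η < g t → δ ≤ g'' t) : False := by
  -- Step 1: g t ≥ g 0 for all t ≥ 0
  have key : ∀ t, 0 ≤ t → g 0 ≤ g t := by
    by_contra hcon
    push_neg at hcon
    obtain ⟨t₀, ht₀, ht₀'⟩ := hcon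
    set S : Set ℝ := {t | 0 ≤ t ∧ ∀ s ∈ Set.Icc 0 t, g 0 ≤ g s} with hS
    have h0S : (0:ℝ) ∈ S := ⟨le_refl 0, fun s hs => by
      have : s = 0 := le_antisymm hs.2 hs.1
      simp [this]⟩
    have hSne : S.Nonempty := ⟨0, h0S⟩
    have hSbdd : BddAbove S := by
      refine ⟨t₀, fun t ht => ?_⟩
      by_contra hlt
      push_neg at hlt
      exact absurd (ht.2 t₀ ⟨ht₀, hlt.le⟩) (not_le.mpr ht₀')
    set τ := sSup S with hτ
    have hτ0 : 0 ≤ τ := le_csSup hSbdd h0S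
    -- all s in [0, τ) satisfy g 0 ≤ g s
    have hIco : ∀ s ∈ Set.Ico 0 τ, g 0 ≤ g s := by
      intro s hs
      obtain ⟨t, htS, hst⟩ := exists_lt_of_lt_csSup hSne hs.2
      exact htS.2 s ⟨hs.1, hst.le⟩
    -- τ ∈ S
    have hgτle : g 0 ≤ g τ := by
      rcases eq_or_lt_of_le hτ0 with h' | h'
      · rw [← h']
      · have htend : Filter.Tendsto g (nhdsWithin τ (Set.Iio τ)) (nhds (g τ)) :=
          (hg1 τ).continuousAt.continuousWithinAt
        refine ge_of_tendsto htend ?_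
        filter_upwards [Ioo_mem_nhdsLT_of_mem (Set.mem_Ioc.mpr ⟨h', le_refl τ⟩)] with u hu
        exact hIco u ⟨hu.1.le, hu.2⟩
    have hτS : τ ∈ S := by
      refine ⟨hτ0, fun s hs => ?_⟩
      rcases lt_or_eq_of_le hs.2 with h | h
      · exact hIco s ⟨hs.1, h⟩
      · rw [h]; exact hgτle
    -- on [0, τ], g'' ≥ δ, hence g' τ ≥ δ τ ≥ 0
    have hgτ : M - η < g τ := lt_of_lt_of_le h0 (hτS.2 τ ⟨hτ0, le_refl τ⟩)
    have hg'τ : 0 ≤ g' τ := by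
      have := deriv_lower hg2 (a := 0) (b := τ) (δ := δ)
        (fun s hs => hdd s (lt_of_lt_of_le h0 (hτS.2 s hs))) τ ⟨hτ0, le_refl τ⟩
      · nlinarith
    -- by continuity, g > M - η on [τ, τ + ε] for some ε > 0
    have hmem : {s | M - η < g s} ∈ nhds τ :=
      (hg1 τ).continuousAt (Ioi_mem_nhds hgτ)
    obtain ⟨ε, hε, hball⟩ := Metric.mem_nhds_iff.mp hmem
    have hεI : ∀ s ∈ Set.Icc τ (τ + ε/2), M - η < g s := by
      intro s hs
      apply hball
      rw [Metric.mem_ball, Real.dist_eq, abs_lt]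
      constructor <;> [linarith [hs.1]; linarith [hs.2]]
    -- hence g' ≥ 0 on [τ, τ+ε/2], so g is monotone there
    have hg'pos : ∀ s ∈ Set.Icc τ (τ + ε/2), 0 ≤ g' s := by
      intro s hs
      have := deriv_lower hg2 (a := τ) (b := τ + ε/2) (δ := δ)
        (fun u hu => hdd u (hεI u hu)) s hs
      nlinarith [hs.1]
    have hmono : MonotoneOn g (Set.Icc τ (τ + ε/2)) := mono_of_hasDerivAt hg1 hg'pos
    -- so τ + ε/2 ∈ S, contradicting τ = sSup S
    have hmemS : τ + ε/2 ∈ S := by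
      refine ⟨by linarith, fun s hs => ?_⟩
      rcases le_or_gt s τ with h | h
      · exact hτS.2 s ⟨hs.1, h⟩
      · have := hmono (Set.left_mem_Icc.mpr (by linarith)) ⟨h.le, hs.2⟩ h.le
        exact le_trans (hτS.2 τ ⟨hτ0, le_refl τ⟩) this
    have := le_csSup hSbdd hmemS
    linarith
  -- Step 2: blow up. g'' ≥ δ on [0,∞), so g' t ≥ δ t, so g grows quadratically.
  have hdd' : ∀ t, 0 ≤ t → δ ≤ g'' t := fun t ht => hdd t (lt_of_lt_of_le h0 (key t ht))
  have hg' : ∀ t, 0 ≤ t → δ * t ≤ g' t := by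
    intro t ht
    have := deriv_lower hg2 (a := 0) (b := t) (δ := δ)
      (fun s hs => hdd' s hs.1) t ⟨ht, le_refl t⟩
    nlinarith
  -- quadratic lower bound
  have hquad : ∀ T, 0 ≤ T → g 0 + δ * T^2 / 2 ≤ g T := by
    intro T hT
    have hm : MonotoneOn (fun t => g t - δ * t^2 / 2) (Set.Icc 0 T) := by
      apply mono_of_hasDerivAt (φ' := fun t => g' t - δ * t)
      · intro t
        have : HasDerivAt (fun t : ℝ => δ * t^2 / 2) (δ * t) t := by
          have := ((hasDerivAt_pow 2 t).const_mul δ).div_const 2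
          exact this.congr_deriv (by rw [show (2:ℕ) - 1 = 1 from rfl]; push_cast; ring)
        simpa using (hg1 t).fun_sub this
      · intro s hs; linarith [hg' s hs.1]
    have := hm (Set.left_mem_Icc.mpr hT) (Set.right_mem_Icc.mpr hT) hT
    simp only at this
    linarith
  have hMg : g 0 ≤ M := hM 0
  obtain ⟨T, hT0, hTbig⟩ : ∃ T, 0 ≤ T ∧ M - g 0 + 1 ≤ δ * T^2 / 2 := by
    refine ⟨Real.sqrt (2 * (M - g 0 + 1) / δ), Real.sqrt_nonneg _, ?_⟩
    rw [Real.sq_sqrt (by apply div_nonneg <;> linarith)]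
    rw [mul_div_assoc' δ, mul_div_cancel_left₀ _ (ne_of_gt hδ)]
    linarith
  have := hquad T hT0
  have := hM T
  linarith

theorem stmt_18 (n k : ℕ) (hn : 1 < n) (hk : k ≤ n) (hnk : n - k ≤ 1)
    (c : ℕ → ℝ) (hc : c 0 > c (k + 1))
    (F : ℝ → ℝ)
    (hF : ∀ x, F x = ∑ i ∈ Finset.range (k + 1), c i * x ^ (n - i) + c (k + 1))
    (f : ℝ → ℝ) (hf : ContDiff ℝ 2 f) (hf0 : ∀ x, 0 ≤ f x)
    (hfbdd : ∃ C, ∀ x, f x ≤ C)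
    (hf2bdd : ∃ C, ∀ x, |deriv (deriv f) x| ≤ C)
    (hineq : ∀ x, F (f x) ≤ deriv (deriv f) x) :
    F (sSup (Set.range f)) ≤ 0 := by
  by_contra hFM
  push_neg at hFM
  obtain ⟨C, hC⟩ := hfbdd
  have hne : (Set.range f).Nonempty := ⟨f 0, Set.mem_range_self 0⟩
  have hbdd : BddAbove (Set.range f) := ⟨C, fun y ⟨x, hx⟩ => hx ▸ hC x⟩
  set M := sSup (Set.range f) with hM
  have hfle : ∀ x, f x ≤ M := fun x => le_csSup hbdd (Set.mem_range_self x)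
  -- F is continuous
  have hFcont : Continuous F := by
    have : F = fun x => ∑ i ∈ Finset.range (k + 1), c i * x ^ (n - i) + c (k + 1) :=
      funext hF
    rw [this]
    exact (continuous_finset_sum _ fun i _ => continuous_const.mul (continuous_pow (n - i))).add
      continuous_const
  set δ := F M / 2 with hδdef
  have hδ : 0 < δ := by positivity
  -- find η > 0 with F y > δ for |y - M| < η
  have hmem : {y | δ < F y} ∈ nhds M := hFcont.continuousAt (Ioi_mem_nhds (by linarith))
  obtain ⟨η, hη, hball⟩ := Metric.mem_nhds_iff.mp hmem
  have hην : ∀ y, |y - M| < η → δ < F y := fun y hy => hball (by rwa [Metric.mem_ball, Real.dist_eq])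
  -- find x₀ with f x₀ > M - η
  obtain ⟨y, ⟨x₀, hx₀⟩, hy⟩ := exists_lt_of_lt_csSup hne (show M - η < M by linarith)
  have hfx₀ : M - η < f x₀ := hx₀ ▸ hy
  -- differentiability data
  have hf2 : ContDiff ℝ (1 + 1 : ℕ) f := by exact_mod_cast hf
  have hd1 : Differentiable ℝ f := hf.differentiable (by norm_num)
  have hcd1 : ContDiff ℝ 1 (deriv f) := (contDiff_succ_iff_deriv.mp hf2).2.2
  have hd2 : Differentiable ℝ (deriv f) := hcd1.differentiable one_ne_zero
  -- choose direction
  set σ : ℝ := if 0 ≤ deriv f x₀ then 1 else -1 with hσdef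
  have hσsq : σ * σ = 1 := by
    rcases le_or_gt 0 (deriv f x₀) with h | h
    · simp [hσdef, h]
    · norm_num [hσdef, not_le.mpr h]
  have hσd : 0 ≤ σ * deriv f x₀ := by
    rcases le_or_gt 0 (deriv f x₀) with h | h
    · simp only [hσdef, if_pos h, one_mul]; exact h
    · simp only [hσdef, if_neg (not_le.mpr h), neg_one_mul]; linarith
  set g : ℝ → ℝ := fun t => f (x₀ + σ * t) with hg
  set g' : ℝ → ℝ := fun t => σ * deriv f (x₀ + σ * t) with hg'
  set g'' : ℝ → ℝ := fun t => deriv (deriv f) (x₀ + σ * t) with hg''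
  have hu : ∀ t : ℝ, HasDerivAt (fun s : ℝ => x₀ + σ * s) σ t := fun t => by
    simpa using ((hasDerivAt_id t).const_mul σ).const_add x₀
  have hg1 : ∀ t, HasDerivAt g (g' t) t := by
    intro t
    have := ((hd1 (x₀ + σ * t)).hasDerivAt).comp t (hu t)
    simpa [hg, hg', mul_comm, Function.comp_def] using this
  have hg2 : ∀ t, HasDerivAt g' (g'' t) t := by
    intro t
    have := (((hd2 (x₀ + σ * t)).hasDerivAt).comp t (hu t)).const_mul σ
    have h2 : σ * (deriv (deriv f) (x₀ + σ * t) * σ) = g'' t := by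
      rw [hg'']; linear_combination deriv (deriv f) (x₀ + σ * t) * hσsq
    simpa [hg', h2] using this
  refine aux_blowup M η δ hδ g g' g'' hg1 hg2 (fun t => hfle _) ?_ ?_ ?_
  · simpa [hg] using hfx₀
  · simpa [hg'] using hσd
  · intro t ht
    have h1 : g t ≤ M := hfle _
    have h2 : δ < F (g t) := hην _ (abs_lt.mpr ⟨by linarith, by linarith⟩)
    have h3 : F (g t) ≤ g'' t := hineq (x₀ + σ * t)
    linarith
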